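/- Let G be a beer graph satisfying the generalized triangle inequality, and let u, v, w, w' be vertices such that (u,w), (w,v), (u,w'), (w',v) are edges of G and every walk in G from u to v visits w or w'. Then dist_B(u,v) is the minimum of the four quantities: dist_B(u,w) + ω(w,v); ω(u,w) + dist_B(w,v); dist_B(u,w') + ω(w',v); and ω(u,w') + dist_B(w',v). -/
import Mathlib


open scoped ENNReal

/-- The weight of a walk: the sum, with multiplicity, of the weights of its edges. -/
noncomputable def walkWeight {V : Type*} (ω : V → V → ℝ≥0∞) {G : SimpleGraph V}
    {u v : V} (p : G.Walk u v) : ℝ≥0∞ :=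
  (p.darts.map fun d => ω d.toProd.1 d.toProd.2).sum

/-- The (weighted) distance: the infimum in ℝ≥0∞ of the weights of all walks. -/
noncomputable def gDist {V : Type*} (G : SimpleGraph V) (ω : V → V → ℝ≥0∞) (u v : V) : ℝ≥0∞ :=
  ⨅ p : G.Walk u v, walkWeight ω p

/-- The beer distance: the infimum in ℝ≥0∞ of the weights of all walks visiting
a vertex of `B`. -/
noncomputable def beerDist {V : Type*} (G : SimpleGraph V) (ω : V → V → ℝ≥0∞)
    (B : Set V) (u v : V) : ℝ≥0∞ :=
  ⨅ (p : G.Walk u v) (_ : ∃ b ∈ B, b ∈ p.support), walkWeight ω p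

lemma walkWeight_append {V : Type*} (ω : V → V → ℝ≥0∞) {G : SimpleGraph V}
    {a b c : V} (p : G.Walk a b) (q : G.Walk b c) :
    walkWeight ω (p.append q) = walkWeight ω p + walkWeight ω q := by
  simp [walkWeight, SimpleGraph.Walk.darts_append]

lemma walkWeight_cons {V : Type*} (ω : V → V → ℝ≥0∞) {G : SimpleGraph V}
    {a b c : V} (h : G.Adj a b) (p : G.Walk b c) :
    walkWeight ω (SimpleGraph.Walk.cons h p) = ω a b + walkWeight ω p := by
  simp [walkWeight]

lemma beerDist_le' {V : Type*} {G : SimpleGraph V} (ω : V → V → ℝ≥0∞) (B : Set V)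
    {a b : V} (p : G.Walk a b) (hp : ∃ x ∈ B, x ∈ p.support) :
    beerDist G ω B a b ≤ walkWeight ω p :=
  iInf₂_le p hp

lemma gDist_le' {V : Type*} {G : SimpleGraph V} (ω : V → V → ℝ≥0∞)
    {a b : V} (p : G.Walk a b) : gDist G ω a b ≤ walkWeight ω p :=
  iInf_le _ p

lemma key_split {V : Type*} [DecidableEq V] (G : SimpleGraph V) (ω : V → V → ℝ≥0∞) (B : Set V)
    (hgti : ∀ a b, G.Adj a b → gDist G ω a b = ω a b)
    {u v x : V} (hx1 : G.Adj u x) (hx2 : G.Adj x v) (p : G.Walk u v) (hw : x ∈ p.support)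
    {b : V} (hb : b ∈ B) (hbp : b ∈ p.support) :
    min (beerDist G ω B u x + ω x v) (ω u x + beerDist G ω B x v) ≤ walkWeight ω p := by
  have hsplit := p.take_spec hw
  have hsum : walkWeight ω p
      = walkWeight ω (p.takeUntil x hw) + walkWeight ω (p.dropUntil x hw) := by
    rw [← walkWeight_append, hsplit]
  rw [← hsplit, SimpleGraph.Walk.mem_support_append_iff] at hbp
  rcases hbp with hb1 | hb2
  · refine le_trans (min_le_left _ _) ?_
    rw [hsum]
    gcongr
    · exact beerDist_le' ω B _ ⟨b, hb, hb1⟩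
    · rw [← hgti x v hx2]; exact gDist_le' ω _
  · refine le_trans (min_le_right _ _) ?_
    rw [hsum]
    gcongr
    · rw [← hgti u x hx1]; exact gDist_le' ω _
    · exact beerDist_le' ω B _ ⟨b, hb, hb2⟩

lemma beerDist_le_right {V : Type*} (G : SimpleGraph V) (ω : V → V → ℝ≥0∞) (B : Set V)
    {u v x : V} (hx2 : G.Adj x v) :
    beerDist G ω B u v ≤ beerDist G ω B u x + ω x v := by
  rw [show beerDist G ω B u x + ω x v
      = ⨅ (p : G.Walk u x) (_ : ∃ b ∈ B, b ∈ p.support), (walkWeight ω p + ω x v) by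
    rw [beerDist, ENNReal.iInf_add]; simp_rw [ENNReal.iInf_add]]
  refine le_iInf fun p => le_iInf fun hp => ?_
  obtain ⟨b, hb, hb'⟩ := hp
  calc beerDist G ω B u v ≤ walkWeight ω (p.append hx2.toWalk) :=
        beerDist_le' ω B _ ⟨b, hb, (SimpleGraph.Walk.mem_support_append_iff _ _).2 (Or.inl hb')⟩
    _ = walkWeight ω p + ω x v := by
        rw [walkWeight_append]
        simp [SimpleGraph.Adj.toWalk, walkWeight_cons, walkWeight]

lemma beerDist_le_left {V : Type*} (G : SimpleGraph V) (ω : V → V → ℝ≥0∞) (B : Set V)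
    {u v x : V} (hx1 : G.Adj u x) :
    beerDist G ω B u v ≤ ω u x + beerDist G ω B x v := by
  rw [show ω u x + beerDist G ω B x v
      = ⨅ (p : G.Walk x v) (_ : ∃ b ∈ B, b ∈ p.support), (ω u x + walkWeight ω p) by
    rw [beerDist, ENNReal.add_iInf]; simp_rw [ENNReal.add_iInf]]
  refine le_iInf fun p => le_iInf fun hp => ?_
  obtain ⟨b, hb, hb'⟩ := hp
  calc beerDist G ω B u v ≤ walkWeight ω (SimpleGraph.Walk.cons hx1 p) :=
        beerDist_le' ω B _ ⟨b, hb, by simp [hb']⟩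
    _ = ω u x + walkWeight ω p := walkWeight_cons ω hx1 p

/-- In a beer graph satisfying the generalized triangle inequality,
if every walk from u to v visits w or w', where (u,w), (w,v), (u,w'), (w',v) are edges,
then the beer distance from u to v is the minimum of the four listed quantities. -/
theorem beerDist_through_two_vertices {V : Type*} [Fintype V] [DecidableEq V]
    (G : SimpleGraph V) (ω : V → V → ℝ≥0∞) (B : Set V)
    (hsymm : ∀ a b, ω a b = ω b a)
    (hpos : ∀ a b, G.Adj a b → 0 < ω a b ∧ ω a b < ⊤)
    (hgti : ∀ a b, G.Adj a b → gDist G ω a b = ω a b)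
    (u v w w' : V)
    (h1 : G.Adj u w) (h2 : G.Adj w v) (h3 : G.Adj u w') (h4 : G.Adj w' v)
    (hvisit : ∀ p : G.Walk u v, w ∈ p.support ∨ w' ∈ p.support) :
    beerDist G ω B u v =
      min (min (beerDist G ω B u w + ω w v) (ω u w + beerDist G ω B w v))
          (min (beerDist G ω B u w' + ω w' v) (ω u w' + beerDist G ω B w' v)) := by
  refine le_antisymm ?_ ?_
  · simp only [le_min_iff]
    exact ⟨⟨beerDist_le_right G ω B h2, beerDist_le_left G ω B h1⟩,
      ⟨beerDist_le_right G ω B h4, beerDist_le_left G ω B h3⟩⟩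
  · refine le_iInf fun p => le_iInf fun hp => ?_
    obtain ⟨b, hb, hbp⟩ := hp
    rcases hvisit p with hw | hw
    · exact le_trans (min_le_left _ _) (key_split G ω B hgti h1 h2 p hw hb hbp)
    · exact le_trans (min_le_right _ _) (key_split G ω B hgti h3 h4 p hw hb hbp)
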